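/- The assignment of isotropic lines to maximal totally isotropic subspaces is surjective: for every complex subspace S ⊆ ℂ⁴ of complex dimension 2 which is totally isotropic with respect to the pseudo-Hermitian form ((u|w) = 0 for all u, w ∈ S), there exists a nonzero x ∈ ℝ⁶ with Q(x) = 0 such that S = range X(x). -/

import Mathlib

open Matrix Complex

/-- The six antilinear-Clifford matrices Γ₁,…,Γ₆ (indexed 0,…,5). -/
noncomputable def Gam : Fin 6 → Matrix (Fin 4) (Fin 4) ℂ
  | 0 => !![0, 0, I, 0; 0, 0, 0, -I; I, 0, 0, 0; 0, -I, 0, 0]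
  | 1 => !![0, 0, 1, 0; 0, 0, 0, 1; 1, 0, 0, 0; 0, 1, 0, 0]
  | 2 => !![0, 0, 0, -I; 0, 0, -I, 0; 0, -I, 0, 0; -I, 0, 0, 0]
  | 3 => !![0, I, 0, 0; -I, 0, 0, 0; 0, 0, 0, I; 0, 0, -I, 0]
  | 4 => !![0, 0, 0, -1; 0, 0, 1, 0; 0, 1, 0, 0; -1, 0, 0, 0]
  | 5 => !![0, 1, 0, 0; -1, 0, 0, 0; 0, 0, 0, -1; 0, 0, 1, 0]

/-- X(x) = Σ x^α Γ_α. -/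
noncomputable def Xm (x : Fin 6 → ℝ) : Matrix (Fin 4) (Fin 4) ℂ :=
  ∑ α : Fin 6, (x α : ℂ) • Gam α

/-- The quadratic form of signature (4,2). -/
def Qform (x : Fin 6 → ℝ) : ℝ :=
  x 0 ^ 2 + x 1 ^ 2 + x 2 ^ 2 - x 3 ^ 2 + x 4 ^ 2 - x 5 ^ 2

/-- The bilinear form of signature (4,2). -/
def Qbil (x y : Fin 6 → ℝ) : ℝ :=
  x 0 * y 0 + x 1 * y 1 + x 2 * y 2 - x 3 * y 3 + x 4 * y 4 - x 5 * y 5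

/-- G = diag(1,1,-1,-1) as a function. -/
def Gv : Fin 4 → ℝ := ![1, 1, -1, -1]

/-- The pseudo-Hermitian form of signature (2,2) on ℂ⁴. -/
def herm (u v : Fin 4 → ℂ) : ℂ :=
  u 0 * starRingEnd ℂ (v 0) + u 1 * starRingEnd ℂ (v 1)
    - u 2 * starRingEnd ℂ (v 2) - u 3 * starRingEnd ℂ (v 3)

/-- The Levi-Civita symbol on four indices, ε^{0123} = 1. -/
noncomputable def eps (i j k l : Fin 4) : ℝ :=
  (((j : ℕ) : ℝ) - ((i : ℕ) : ℝ)) * (((k : ℕ) : ℝ) - ((i : ℕ) : ℝ)) *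
    (((l : ℕ) : ℝ) - ((i : ℕ) : ℝ)) * (((k : ℕ) : ℝ) - ((j : ℕ) : ℝ)) *
    (((l : ℕ) : ℝ) - ((j : ℕ) : ℝ)) * (((l : ℕ) : ℝ) - ((k : ℕ) : ℝ)) / 12

/-- The six antisymmetric matrices Σ₁,…,Σ₆ (indexed 0,…,5). -/
noncomputable def Sig : Fin 6 → Matrix (Fin 4) (Fin 4) ℂ
  | 0 => !![0, 0, -I, 0; 0, 0, 0, I; I, 0, 0, 0; 0, -I, 0, 0]
  | 1 => !![0, 0, -1, 0; 0, 0, 0, -1; 1, 0, 0, 0; 0, 1, 0, 0]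
  | 2 => !![0, 0, 0, I; 0, 0, I, 0; 0, -I, 0, 0; -I, 0, 0, 0]
  | 3 => !![0, I, 0, 0; -I, 0, 0, 0; 0, 0, 0, -I; 0, 0, I, 0]
  | 4 => !![0, 0, 0, 1; 0, 0, -1, 0; 0, 1, 0, 0; -1, 0, 0, 0]
  | 5 => !![0, 1, 0, 0; -1, 0, 0, 0; 0, 0, 0, 1; 0, 0, -1, 0]

/-- Σ(x) = Σ x^α Σ_α. -/
noncomputable def Sm (x : Fin 6 → ℝ) : Matrix (Fin 4) (Fin 4) ℂ :=
  ∑ α : Fin 6, (x α : ℂ) • Sig α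

/-- The antilinear Hodge star on antisymmetric 4×4 complex matrices. -/
noncomputable def hstar (A : Matrix (Fin 4) (Fin 4) ℂ) : Matrix (Fin 4) (Fin 4) ℂ :=
  Matrix.of fun i j =>
    (1 / 2 : ℂ) * ∑ k : Fin 4, ∑ l : Fin 4,
      ((eps i j k l : ℝ) : ℂ) * ((Gv k : ℝ) : ℂ) * ((Gv l : ℝ) : ℂ) * starRingEnd ℂ (A k l)


lemma conj_eq' (z : ℂ) : (starRingEnd ℂ) z = (z.re : ℂ) - (z.im : ℂ) * I := by
  apply Complex.ext <;> simp

lemma key (S : Submodule ℂ (Fin 4 → ℂ)) (u w : Fin 4 → ℂ) (p q : Fin 4)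
    (hm : u p * w q - u q * w p ≠ 0)
    (hu : u ∈ S) (hw : w ∈ S)
    (hsp : ∀ s ∈ S, ∃ c d : ℂ, s = c • u + d • w)
    (lam : ℂ) (hnorm : lam * (starRingEnd ℂ) lam = 1)
    (h1 : (starRingEnd ℂ) (u 2) * (starRingEnd ℂ) (w 3) - (starRingEnd ℂ) (u 3) * (starRingEnd ℂ) (w 2)
        = lam * (u 0 * w 1 - u 1 * w 0))
    (h2 : (starRingEnd ℂ) (u 1) * (starRingEnd ℂ) (w 3) - (starRingEnd ℂ) (u 3) * (starRingEnd ℂ) (w 1)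
        = lam * (u 0 * w 2 - u 2 * w 0))
    (h3 : (starRingEnd ℂ) (u 1) * (starRingEnd ℂ) (w 2) - (starRingEnd ℂ) (u 2) * (starRingEnd ℂ) (w 1)
        = -(lam * (u 0 * w 3 - u 3 * w 0))) :
    ∃ x : Fin 6 → ℝ, Qform x = 0 ∧ S = LinearMap.range (Xm x).mulVecLin := by
  obtain ⟨μ, hμsq⟩ := IsAlgClosed.exists_pow_nat_eq lam (n := 2) (by norm_num)
  have hnsq : Complex.normSq lam = 1 := by
    have := hnorm; rw [Complex.mul_conj] at this; exact_mod_cast this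
  have hμn : Complex.normSq μ = 1 := by
    have h := map_pow Complex.normSq μ 2
    rw [hμsq, hnsq] at h
    nlinarith [Complex.normSq_nonneg μ, h.symm]
  have hμc : μ * (starRingEnd ℂ) μ = 1 := by
    rw [Complex.mul_conj, hμn]; norm_num
  have hμ0 : μ ≠ 0 := by
    intro h; rw [h] at hμc; simp at hμc
  have hlc : (starRingEnd ℂ) μ * lam = μ := by
    rw [← hμsq]; linear_combination μ * hμc
  set z1 := μ * (u 0 * w 1 - u 1 * w 0) with hz1
  set z2 := μ * (u 1 * w 3 - u 3 * w 1) with hz2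
  set z3 := μ * (u 1 * w 2 - u 2 * w 1) with hz3
  -- conjugation relations
  have hc1 : (starRingEnd ℂ) (μ * (u 2 * w 3 - u 3 * w 2)) = z1 := by
    simp only [_root_.map_mul, _root_.map_sub, hz1]
    rw [h1]
    linear_combination (u 0 * w 1 - u 1 * w 0) * hlc
  have hc2 : (starRingEnd ℂ) z2 = μ * (u 0 * w 2 - u 2 * w 0) := by
    rw [hz2]
    simp only [_root_.map_mul, _root_.map_sub]
    rw [h2]
    linear_combination (u 0 * w 2 - u 2 * w 0) * hlc
  have hc3 : (starRingEnd ℂ) z3 = -(μ * (u 0 * w 3 - u 3 * w 0)) := by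
    rw [hz3]
    simp only [_root_.map_mul, _root_.map_sub]
    rw [h3]
    linear_combination -(u 0 * w 3 - u 3 * w 0) * hlc
  have f1 : μ * (u 2 * w 3 - u 3 * w 2) = (starRingEnd ℂ) z1 := by
    rw [← hc1, Complex.conj_conj]
  have f2 : μ * (u 0 * w 2 - u 2 * w 0) = (starRingEnd ℂ) z2 := hc2.symm
  have f3 : μ * (u 0 * w 3 - u 3 * w 0) = -(starRingEnd ℂ) z3 := by rw [hc3]; ring
  refine ⟨![z2.im, -z2.re, z3.im, z1.im, -z3.re, z1.re], ?_, ?_⟩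
  · -- Qform = 0
    have hcx : ((Complex.normSq z2 + Complex.normSq z3 - Complex.normSq z1 : ℝ) : ℂ) = 0 := by
      push_cast
      rw [← Complex.mul_conj z1, ← Complex.mul_conj z2, ← Complex.mul_conj z3, ← f1, hc2, hc3,
        hz1, hz2, hz3]
      ring
    have hr : Complex.normSq z2 + Complex.normSq z3 - Complex.normSq z1 = 0 := by
      exact_mod_cast hcx
    have e0 : ![z2.im, -z2.re, z3.im, z1.im, -z3.re, z1.re] 0 = z2.im := rfl
    have e1 : ![z2.im, -z2.re, z3.im, z1.im, -z3.re, z1.re] 1 = -z2.re := rfl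
    have e2 : ![z2.im, -z2.re, z3.im, z1.im, -z3.re, z1.re] 2 = z3.im := rfl
    have e3 : ![z2.im, -z2.re, z3.im, z1.im, -z3.re, z1.re] 3 = z1.im := rfl
    have e4 : ![z2.im, -z2.re, z3.im, z1.im, -z3.re, z1.re] 4 = -z3.re := rfl
    have e5 : ![z2.im, -z2.re, z3.im, z1.im, -z3.re, z1.re] 5 = z1.re := rfl
    simp only [Complex.normSq_apply] at hr
    simp only [Qform, e0, e1, e2, e3, e4, e5]
    linear_combination hr
  · -- range
    have hXM : Xm ![z2.im, -z2.re, z3.im, z1.im, -z3.re, z1.re]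
        = Matrix.of (fun i j => μ * (u i * w j - u j * w i) * ((Gv j : ℝ) : ℂ)) := by
      have hent : ∀ i j : Fin 4, Xm ![z2.im, -z2.re, z3.im, z1.im, -z3.re, z1.re] i j
          = (z2.im : ℂ) * Gam 0 i j + (-z2.re : ℝ) * Gam 1 i j + (z3.im : ℂ) * Gam 2 i j
            + (z1.im : ℂ) * Gam 3 i j + (-z3.re : ℝ) * Gam 4 i j + (z1.re : ℂ) * Gam 5 i j := by
        intro i j
        have e0 : ![z2.im, -z2.re, z3.im, z1.im, -z3.re, z1.re] 0 = z2.im := rfl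
        have e1 : ![z2.im, -z2.re, z3.im, z1.im, -z3.re, z1.re] 1 = -z2.re := rfl
        have e2 : ![z2.im, -z2.re, z3.im, z1.im, -z3.re, z1.re] 2 = z3.im := rfl
        have e3 : ![z2.im, -z2.re, z3.im, z1.im, -z3.re, z1.re] 3 = z1.im := rfl
        have e4 : ![z2.im, -z2.re, z3.im, z1.im, -z3.re, z1.re] 4 = -z3.re := rfl
        have e5 : ![z2.im, -z2.re, z3.im, z1.im, -z3.re, z1.re] 5 = z1.re := rfl
        simp only [Xm, Fin.sum_univ_six, Matrix.sum_apply, Matrix.smul_apply, smul_eq_mul,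
          e0, e1, e2, e3, e4, e5]
      ext i j
      rw [hent]
      fin_cases i <;> fin_cases j <;>
        simp [Gam, Gv, Matrix.vecHead, Matrix.vecTail] <;>
        push_cast <;>
        first
        | linear_combination Complex.re_add_im z1 + hz1
        | linear_combination -Complex.re_add_im z1 - hz1
        | linear_combination Complex.re_add_im z2 + hz2
        | linear_combination -Complex.re_add_im z2 - hz2
        | linear_combination Complex.re_add_im z3 + hz3
        | linear_combination -Complex.re_add_im z3 - hz3
        | linear_combination conj_eq' z1 + f1
        | linear_combination -conj_eq' z1 - f1
        | linear_combination conj_eq' z2 + f2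
        | linear_combination -conj_eq' z2 - f2
        | linear_combination conj_eq' z3 + f3
        | linear_combination -conj_eq' z3 - f3
        | linear_combination -conj_eq' z3 + f3
        | linear_combination conj_eq' z3 - f3
        | linear_combination -conj_eq' z1 + f1
        | linear_combination conj_eq' z1 - f1
        | linear_combination -conj_eq' z2 + f2
        | linear_combination conj_eq' z2 - f2
    have hg : ∀ j : Fin 4, ((Gv j : ℝ) : ℂ) * ((Gv j : ℝ) : ℂ) = 1 := by
      intro j; fin_cases j <;> norm_num [Gv]
    set m := u p * w q - u q * w p with hmm
    have hum : (Xm ![z2.im, -z2.re, z3.im, z1.im, -z3.re, z1.re]).mulVecLin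
        (Pi.single p (((Gv p : ℝ) : ℂ) * (-(u q))) + Pi.single q (((Gv q : ℝ) : ℂ) * (u p)))
        = (μ * m) • u := by
      rw [Matrix.mulVecLin_apply, hXM, Matrix.mulVec_add, Matrix.mulVec_single,
        Matrix.mulVec_single]
      funext i
      simp only [Pi.add_apply, Pi.smul_apply, Matrix.col_apply, MulOpposite.smul_eq_mul_unop,
        MulOpposite.unop_op, Matrix.of_apply, smul_eq_mul, hmm]
      linear_combination (μ * (u i * w p - u p * w i) * (-(u q))) * hg p
        + (μ * (u i * w q - u q * w i) * (u p)) * hg q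
    have hwm : (Xm ![z2.im, -z2.re, z3.im, z1.im, -z3.re, z1.re]).mulVecLin
        (Pi.single p (((Gv p : ℝ) : ℂ) * (-(w q))) + Pi.single q (((Gv q : ℝ) : ℂ) * (w p)))
        = (μ * m) • w := by
      rw [Matrix.mulVecLin_apply, hXM, Matrix.mulVec_add, Matrix.mulVec_single,
        Matrix.mulVec_single]
      funext i
      simp only [Pi.add_apply, Pi.smul_apply, Matrix.col_apply, MulOpposite.smul_eq_mul_unop,
        MulOpposite.unop_op, Matrix.of_apply, smul_eq_mul, hmm]
      linear_combination (μ * (u i * w p - u p * w i) * (-(w q))) * hg p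
        + (μ * (u i * w q - u q * w i) * (w p)) * hg q
    have hmu0 : μ * m ≠ 0 := mul_ne_zero hμ0 hm
    have huR : u ∈ LinearMap.range (Xm ![z2.im, -z2.re, z3.im, z1.im, -z3.re, z1.re]).mulVecLin := by
      have h1' : (μ * m) • u ∈ LinearMap.range
          (Xm ![z2.im, -z2.re, z3.im, z1.im, -z3.re, z1.re]).mulVecLin := ⟨_, hum⟩
      have := Submodule.smul_mem _ (μ * m)⁻¹ h1'
      rwa [smul_smul, inv_mul_cancel₀ hmu0, one_smul] at this
    have hwR : w ∈ LinearMap.range (Xm ![z2.im, -z2.re, z3.im, z1.im, -z3.re, z1.re]).mulVecLin := by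
      have h1' : (μ * m) • w ∈ LinearMap.range
          (Xm ![z2.im, -z2.re, z3.im, z1.im, -z3.re, z1.re]).mulVecLin := ⟨_, hwm⟩
      have := Submodule.smul_mem _ (μ * m)⁻¹ h1'
      rwa [smul_smul, inv_mul_cancel₀ hmu0, one_smul] at this
    apply le_antisymm
    · intro s hs
      obtain ⟨c, d, rfl⟩ := hsp s hs
      exact Submodule.add_mem _ (Submodule.smul_mem _ _ huR) (Submodule.smul_mem _ _ hwR)
    · rintro s ⟨v, rfl⟩
      rw [Matrix.mulVecLin_apply, hXM]
      have : (Matrix.of fun i j => μ * (u i * w j - u j * w i) * ((Gv j : ℝ) : ℂ)).mulVec v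
          = (μ * (((Gv 0 : ℝ) : ℂ) * w 0 * v 0 + ((Gv 1 : ℝ) : ℂ) * w 1 * v 1
              + ((Gv 2 : ℝ) : ℂ) * w 2 * v 2 + ((Gv 3 : ℝ) : ℂ) * w 3 * v 3)) • u
            + (-(μ * (((Gv 0 : ℝ) : ℂ) * u 0 * v 0 + ((Gv 1 : ℝ) : ℂ) * u 1 * v 1
              + ((Gv 2 : ℝ) : ℂ) * u 2 * v 2 + ((Gv 3 : ℝ) : ℂ) * u 3 * v 3))) • w := by
        funext i
        simp only [Matrix.mulVec, dotProduct, Fin.sum_univ_four, Matrix.of_apply,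
          Pi.add_apply, Pi.smul_apply, smul_eq_mul]
        ring
      rw [this]
      exact Submodule.add_mem _ (Submodule.smul_mem _ _ hu) (Submodule.smul_mem _ _ hw)

lemma six_minors (u w : Fin 4 → ℂ) (hind : LinearIndependent ℂ ![u, w]) :
    u 0 * w 1 - u 1 * w 0 ≠ 0 ∨ u 2 * w 3 - u 3 * w 2 ≠ 0 ∨ u 0 * w 2 - u 2 * w 0 ≠ 0 ∨
    u 1 * w 3 - u 3 * w 1 ≠ 0 ∨ u 0 * w 3 - u 3 * w 0 ≠ 0 ∨ u 1 * w 2 - u 2 * w 1 ≠ 0 := by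
  by_contra hc
  push_neg at hc
  obtain ⟨c1, c2, c3, c4, c5, c6⟩ := hc
  rw [linearIndependent_fin2] at hind
  obtain ⟨hw0, hcw⟩ := hind
  simp only [Matrix.cons_val_one, Matrix.head_cons, Matrix.cons_val_zero] at hw0 hcw
  have hex : ∃ i, w i ≠ 0 := by
    by_contra h
    push_neg at h
    exact hw0 (funext h)
  obtain ⟨i, hwi⟩ := hex
  have hall : ∀ a b : Fin 4, u a * w b = u b * w a := by
    intro a b
    fin_cases a <;> fin_cases b <;>
      simp only [show (⟨0, by omega⟩ : Fin 4) = 0 from rfl, show (⟨1, by omega⟩ : Fin 4) = 1 from rfl,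
        show (⟨2, by omega⟩ : Fin 4) = 2 from rfl, show (⟨3, by omega⟩ : Fin 4) = 3 from rfl] <;>
      first
      | ring1
      | linear_combination c1 | linear_combination -c1
      | linear_combination c2 | linear_combination -c2
      | linear_combination c3 | linear_combination -c3
      | linear_combination c4 | linear_combination -c4
      | linear_combination c5 | linear_combination -c5
      | linear_combination c6 | linear_combination -c6
  apply hcw (u i / w i)
  funext j
  have := hall i j
  simp only [Pi.smul_apply, smul_eq_mul]
  field_simp
  linear_combination this



/-- Surjectivity: every 2-dimensional totally isotropic complex subspace of ℂ^{2,2} is the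
range of X(x) for some nonzero null x ∈ ℝ⁶. -/
theorem isotropic_line_map_surjective (S : Submodule ℂ (Fin 4 → ℂ))
    (hdim : Module.finrank ℂ S = 2)
    (hiso : ∀ u ∈ S, ∀ w ∈ S, herm u w = 0) :
    ∃ x : Fin 6 → ℝ, x ≠ 0 ∧ Qform x = 0 ∧ S = LinearMap.range (Xm x).mulVecLin := by
  obtain ⟨b⟩ : Nonempty (Module.Basis (Fin 2) ℂ S) := ⟨(Module.finBasis ℂ S).reindex (finCongr hdim)⟩
  obtain ⟨u, w, hu, hw, hsp, hind⟩ :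
      ∃ u w : Fin 4 → ℂ, u ∈ S ∧ w ∈ S ∧ (∀ s ∈ S, ∃ c d : ℂ, s = c • u + d • w) ∧
        LinearIndependent ℂ ![u, w] := by
    refine ⟨((b 0 : S) : Fin 4 → ℂ), ((b 1 : S) : Fin 4 → ℂ), (b 0).2, (b 1).2, ?_, ?_⟩
    · intro s hs
      refine ⟨b.repr ⟨s, hs⟩ 0, b.repr ⟨s, hs⟩ 1, ?_⟩
      have h := b.sum_repr ⟨s, hs⟩
      rw [Fin.sum_univ_two] at h
      have h2 := congrArg (Subtype.val) h
      simp only [Submodule.coe_add, SetLike.val_smul] at h2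
      exact h2.symm
    · have h1 := b.linearIndependent.map' S.subtype (Submodule.ker_subtype S)
      have h2 : ![((b 0 : S) : Fin 4 → ℂ), ((b 1 : S) : Fin 4 → ℂ)] = (⇑(S.subtype) ∘ ⇑b) := by
        funext i; fin_cases i <;> rfl
      rw [h2]; exact h1
  have huu := hiso u hu u hu
  have huw := hiso u hu w hw
  have hwu := hiso w hw u hu
  have hww := hiso w hw w hw
  simp only [herm] at huu huw hwu hww
  have I01 : (starRingEnd ℂ (u 2) * starRingEnd ℂ (w 3) - starRingEnd ℂ (u 3) * starRingEnd ℂ (w 2)) * (u 2 * w 3 - u 3 * w 2) = (starRingEnd ℂ (u 0) * starRingEnd ℂ (w 1) - starRingEnd ℂ (u 1) * starRingEnd ℂ (w 0)) * (u 0 * w 1 - u 1 * w 0) := by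
    linear_combination (-(w 2 * starRingEnd ℂ (w 2)) - w 3 * starRingEnd ℂ (w 3)) * huu + (w 2 * starRingEnd ℂ (u 2) + w 3 * starRingEnd ℂ (u 3)) * huw + (u 0 * starRingEnd ℂ (w 0) + u 1 * starRingEnd ℂ (w 1)) * hwu + (-(u 0 * starRingEnd ℂ (u 0)) - u 1 * starRingEnd ℂ (u 1)) * hww
  have I02 : (starRingEnd ℂ (u 2) * starRingEnd ℂ (w 3) - starRingEnd ℂ (u 3) * starRingEnd ℂ (w 2)) * (u 0 * w 2 - u 2 * w 0) = (starRingEnd ℂ (u 1) * starRingEnd ℂ (w 3) - starRingEnd ℂ (u 3) * starRingEnd ℂ (w 1)) * (u 0 * w 1 - u 1 * w 0) := by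
    linear_combination (w 0 * starRingEnd ℂ (w 3)) * huu + (-(w 0 * starRingEnd ℂ (u 3))) * huw + (-(u 0 * starRingEnd ℂ (w 3))) * hwu + (u 0 * starRingEnd ℂ (u 3)) * hww
  have I03 : (starRingEnd ℂ (u 2) * starRingEnd ℂ (w 3) - starRingEnd ℂ (u 3) * starRingEnd ℂ (w 2)) * (u 1 * w 3 - u 3 * w 1) = (starRingEnd ℂ (u 0) * starRingEnd ℂ (w 2) - starRingEnd ℂ (u 2) * starRingEnd ℂ (w 0)) * (u 0 * w 1 - u 1 * w 0) := by
    linear_combination (-(w 1 * starRingEnd ℂ (w 2))) * huu + (w 1 * starRingEnd ℂ (u 2)) * huw + (u 1 * starRingEnd ℂ (w 2)) * hwu + (-(u 1 * starRingEnd ℂ (u 2))) * hww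
  have I04 : (starRingEnd ℂ (u 2) * starRingEnd ℂ (w 3) - starRingEnd ℂ (u 3) * starRingEnd ℂ (w 2)) * (u 0 * w 3 - u 3 * w 0) = (starRingEnd ℂ (u 2) * starRingEnd ℂ (w 1) - starRingEnd ℂ (u 1) * starRingEnd ℂ (w 2)) * (u 0 * w 1 - u 1 * w 0) := by
    linear_combination (-(w 0 * starRingEnd ℂ (w 2))) * huu + (w 0 * starRingEnd ℂ (u 2)) * huw + (u 0 * starRingEnd ℂ (w 2)) * hwu + (-(u 0 * starRingEnd ℂ (u 2))) * hww
  have I05 : (starRingEnd ℂ (u 2) * starRingEnd ℂ (w 3) - starRingEnd ℂ (u 3) * starRingEnd ℂ (w 2)) * (u 1 * w 2 - u 2 * w 1) = (starRingEnd ℂ (u 3) * starRingEnd ℂ (w 0) - starRingEnd ℂ (u 0) * starRingEnd ℂ (w 3)) * (u 0 * w 1 - u 1 * w 0) := by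
    linear_combination (w 1 * starRingEnd ℂ (w 3)) * huu + (-(w 1 * starRingEnd ℂ (u 3))) * huw + (-(u 1 * starRingEnd ℂ (w 3))) * hwu + (u 1 * starRingEnd ℂ (u 3)) * hww
  have I12 : (starRingEnd ℂ (u 0) * starRingEnd ℂ (w 1) - starRingEnd ℂ (u 1) * starRingEnd ℂ (w 0)) * (u 0 * w 2 - u 2 * w 0) = (starRingEnd ℂ (u 1) * starRingEnd ℂ (w 3) - starRingEnd ℂ (u 3) * starRingEnd ℂ (w 1)) * (u 2 * w 3 - u 3 * w 2) := by
    linear_combination (w 2 * starRingEnd ℂ (w 1)) * huu + (-(w 2 * starRingEnd ℂ (u 1))) * huw + (-(u 2 * starRingEnd ℂ (w 1))) * hwu + (u 2 * starRingEnd ℂ (u 1)) * hww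
  have I14 : (starRingEnd ℂ (u 0) * starRingEnd ℂ (w 1) - starRingEnd ℂ (u 1) * starRingEnd ℂ (w 0)) * (u 0 * w 3 - u 3 * w 0) = (starRingEnd ℂ (u 2) * starRingEnd ℂ (w 1) - starRingEnd ℂ (u 1) * starRingEnd ℂ (w 2)) * (u 2 * w 3 - u 3 * w 2) := by
    linear_combination (w 3 * starRingEnd ℂ (w 1)) * huu + (-(w 3 * starRingEnd ℂ (u 1))) * huw + (-(u 3 * starRingEnd ℂ (w 1))) * hwu + (u 3 * starRingEnd ℂ (u 1)) * hww
  have I23 : (starRingEnd ℂ (u 1) * starRingEnd ℂ (w 3) - starRingEnd ℂ (u 3) * starRingEnd ℂ (w 1)) * (u 1 * w 3 - u 3 * w 1) = (starRingEnd ℂ (u 0) * starRingEnd ℂ (w 2) - starRingEnd ℂ (u 2) * starRingEnd ℂ (w 0)) * (u 0 * w 2 - u 2 * w 0) := by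
    linear_combination (-(w 1 * starRingEnd ℂ (w 1)) + w 3 * starRingEnd ℂ (w 3)) * huu + (w 1 * starRingEnd ℂ (u 1) - w 3 * starRingEnd ℂ (u 3)) * huw + (-(u 0 * starRingEnd ℂ (w 0)) + u 2 * starRingEnd ℂ (w 2)) * hwu + (u 0 * starRingEnd ℂ (u 0) - u 2 * starRingEnd ℂ (u 2)) * hww
  have I24 : (starRingEnd ℂ (u 1) * starRingEnd ℂ (w 3) - starRingEnd ℂ (u 3) * starRingEnd ℂ (w 1)) * (u 0 * w 3 - u 3 * w 0) = (starRingEnd ℂ (u 2) * starRingEnd ℂ (w 1) - starRingEnd ℂ (u 1) * starRingEnd ℂ (w 2)) * (u 0 * w 2 - u 2 * w 0) := by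
    linear_combination (-(w 0 * starRingEnd ℂ (w 1))) * huu + (w 0 * starRingEnd ℂ (u 1)) * huw + (u 0 * starRingEnd ℂ (w 1)) * hwu + (-(u 0 * starRingEnd ℂ (u 1))) * hww
  have I25 : (starRingEnd ℂ (u 1) * starRingEnd ℂ (w 3) - starRingEnd ℂ (u 3) * starRingEnd ℂ (w 1)) * (u 1 * w 2 - u 2 * w 1) = (starRingEnd ℂ (u 3) * starRingEnd ℂ (w 0) - starRingEnd ℂ (u 0) * starRingEnd ℂ (w 3)) * (u 0 * w 2 - u 2 * w 0) := by
    linear_combination (w 2 * starRingEnd ℂ (w 3)) * huu + (-(w 2 * starRingEnd ℂ (u 3))) * huw + (-(u 2 * starRingEnd ℂ (w 3))) * hwu + (u 2 * starRingEnd ℂ (u 3)) * hww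
  have I34 : (starRingEnd ℂ (u 0) * starRingEnd ℂ (w 2) - starRingEnd ℂ (u 2) * starRingEnd ℂ (w 0)) * (u 0 * w 3 - u 3 * w 0) = (starRingEnd ℂ (u 2) * starRingEnd ℂ (w 1) - starRingEnd ℂ (u 1) * starRingEnd ℂ (w 2)) * (u 1 * w 3 - u 3 * w 1) := by
    linear_combination (w 3 * starRingEnd ℂ (w 2)) * huu + (-(w 3 * starRingEnd ℂ (u 2))) * huw + (-(u 3 * starRingEnd ℂ (w 2))) * hwu + (u 3 * starRingEnd ℂ (u 2)) * hww
  have I45 : (starRingEnd ℂ (u 2) * starRingEnd ℂ (w 1) - starRingEnd ℂ (u 1) * starRingEnd ℂ (w 2)) * (u 1 * w 2 - u 2 * w 1) = (starRingEnd ℂ (u 3) * starRingEnd ℂ (w 0) - starRingEnd ℂ (u 0) * starRingEnd ℂ (w 3)) * (u 0 * w 3 - u 3 * w 0) := by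
    linear_combination (-(w 0 * starRingEnd ℂ (w 0)) + w 3 * starRingEnd ℂ (w 3)) * huu + (w 0 * starRingEnd ℂ (u 0) - w 3 * starRingEnd ℂ (u 3)) * huw + (-(u 1 * starRingEnd ℂ (w 1)) + u 2 * starRingEnd ℂ (w 2)) * hwu + (u 1 * starRingEnd ℂ (u 1) - u 2 * starRingEnd ℂ (u 2)) * hww

  have main : ∃ x : Fin 6 → ℝ, Qform x = 0 ∧ S = LinearMap.range (Xm x).mulVecLin := by
    obtain hP | hP | hP | hP | hP | hP := six_minors u w hind
    · have hcP : starRingEnd ℂ (u 0 * w 1 - u 1 * w 0) ≠ 0 := by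
        rw [starRingEnd_apply]; exact star_ne_zero.mpr hP
      have hnorm : ((starRingEnd ℂ (u 2) * starRingEnd ℂ (w 3) - starRingEnd ℂ (u 3) * starRingEnd ℂ (w 2)) / (u 0 * w 1 - u 1 * w 0)) * starRingEnd ℂ ((starRingEnd ℂ (u 2) * starRingEnd ℂ (w 3) - starRingEnd ℂ (u 3) * starRingEnd ℂ (w 2)) / (u 0 * w 1 - u 1 * w 0)) = 1 := by
        rw [map_div₀, div_mul_div_comm, div_eq_one_iff_eq (mul_ne_zero hP hcP)]
        simp only [_root_.map_sub, _root_.map_mul, Complex.conj_conj]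
        linear_combination I01
      have hl1 : starRingEnd ℂ (u 2) * starRingEnd ℂ (w 3) - starRingEnd ℂ (u 3) * starRingEnd ℂ (w 2) = ((starRingEnd ℂ (u 2) * starRingEnd ℂ (w 3) - starRingEnd ℂ (u 3) * starRingEnd ℂ (w 2)) / (u 0 * w 1 - u 1 * w 0)) * (u 0 * w 1 - u 1 * w 0) := by
        rw [div_mul_cancel₀ _ hP]
      have hl2 : starRingEnd ℂ (u 1) * starRingEnd ℂ (w 3) - starRingEnd ℂ (u 3) * starRingEnd ℂ (w 1) = ((starRingEnd ℂ (u 2) * starRingEnd ℂ (w 3) - starRingEnd ℂ (u 3) * starRingEnd ℂ (w 2)) / (u 0 * w 1 - u 1 * w 0)) * (u 0 * w 2 - u 2 * w 0) := by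
        rw [div_mul_eq_mul_div, eq_div_iff hP]
        linear_combination -I02
      have hl3 : starRingEnd ℂ (u 1) * starRingEnd ℂ (w 2) - starRingEnd ℂ (u 2) * starRingEnd ℂ (w 1) = -(((starRingEnd ℂ (u 2) * starRingEnd ℂ (w 3) - starRingEnd ℂ (u 3) * starRingEnd ℂ (w 2)) / (u 0 * w 1 - u 1 * w 0)) * (u 0 * w 3 - u 3 * w 0)) := by
        rw [div_mul_eq_mul_div, ← neg_div, eq_div_iff hP]
        linear_combination I04
      exact key S u w 0 1 hP hu hw hsp _ hnorm hl1 hl2 hl3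
    · have hcP : starRingEnd ℂ (u 2 * w 3 - u 3 * w 2) ≠ 0 := by
        rw [starRingEnd_apply]; exact star_ne_zero.mpr hP
      have hnorm : ((starRingEnd ℂ (u 0) * starRingEnd ℂ (w 1) - starRingEnd ℂ (u 1) * starRingEnd ℂ (w 0)) / (u 2 * w 3 - u 3 * w 2)) * starRingEnd ℂ ((starRingEnd ℂ (u 0) * starRingEnd ℂ (w 1) - starRingEnd ℂ (u 1) * starRingEnd ℂ (w 0)) / (u 2 * w 3 - u 3 * w 2)) = 1 := by
        rw [map_div₀, div_mul_div_comm, div_eq_one_iff_eq (mul_ne_zero hP hcP)]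
        simp only [_root_.map_sub, _root_.map_mul, Complex.conj_conj]
        linear_combination -I01
      have hl1 : starRingEnd ℂ (u 2) * starRingEnd ℂ (w 3) - starRingEnd ℂ (u 3) * starRingEnd ℂ (w 2) = ((starRingEnd ℂ (u 0) * starRingEnd ℂ (w 1) - starRingEnd ℂ (u 1) * starRingEnd ℂ (w 0)) / (u 2 * w 3 - u 3 * w 2)) * (u 0 * w 1 - u 1 * w 0) := by
        rw [div_mul_eq_mul_div, eq_div_iff hP]
        linear_combination I01
      have hl2 : starRingEnd ℂ (u 1) * starRingEnd ℂ (w 3) - starRingEnd ℂ (u 3) * starRingEnd ℂ (w 1) = ((starRingEnd ℂ (u 0) * starRingEnd ℂ (w 1) - starRingEnd ℂ (u 1) * starRingEnd ℂ (w 0)) / (u 2 * w 3 - u 3 * w 2)) * (u 0 * w 2 - u 2 * w 0) := by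
        rw [div_mul_eq_mul_div, eq_div_iff hP]
        linear_combination -I12
      have hl3 : starRingEnd ℂ (u 1) * starRingEnd ℂ (w 2) - starRingEnd ℂ (u 2) * starRingEnd ℂ (w 1) = -(((starRingEnd ℂ (u 0) * starRingEnd ℂ (w 1) - starRingEnd ℂ (u 1) * starRingEnd ℂ (w 0)) / (u 2 * w 3 - u 3 * w 2)) * (u 0 * w 3 - u 3 * w 0)) := by
        rw [div_mul_eq_mul_div, ← neg_div, eq_div_iff hP]
        linear_combination I14
      exact key S u w 2 3 hP hu hw hsp _ hnorm hl1 hl2 hl3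
    · have hcP : starRingEnd ℂ (u 0 * w 2 - u 2 * w 0) ≠ 0 := by
        rw [starRingEnd_apply]; exact star_ne_zero.mpr hP
      have hnorm : ((starRingEnd ℂ (u 1) * starRingEnd ℂ (w 3) - starRingEnd ℂ (u 3) * starRingEnd ℂ (w 1)) / (u 0 * w 2 - u 2 * w 0)) * starRingEnd ℂ ((starRingEnd ℂ (u 1) * starRingEnd ℂ (w 3) - starRingEnd ℂ (u 3) * starRingEnd ℂ (w 1)) / (u 0 * w 2 - u 2 * w 0)) = 1 := by
        rw [map_div₀, div_mul_div_comm, div_eq_one_iff_eq (mul_ne_zero hP hcP)]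
        simp only [_root_.map_sub, _root_.map_mul, Complex.conj_conj]
        linear_combination I23
      have hl1 : starRingEnd ℂ (u 2) * starRingEnd ℂ (w 3) - starRingEnd ℂ (u 3) * starRingEnd ℂ (w 2) = ((starRingEnd ℂ (u 1) * starRingEnd ℂ (w 3) - starRingEnd ℂ (u 3) * starRingEnd ℂ (w 1)) / (u 0 * w 2 - u 2 * w 0)) * (u 0 * w 1 - u 1 * w 0) := by
        rw [div_mul_eq_mul_div, eq_div_iff hP]
        linear_combination I02
      have hl2 : starRingEnd ℂ (u 1) * starRingEnd ℂ (w 3) - starRingEnd ℂ (u 3) * starRingEnd ℂ (w 1) = ((starRingEnd ℂ (u 1) * starRingEnd ℂ (w 3) - starRingEnd ℂ (u 3) * starRingEnd ℂ (w 1)) / (u 0 * w 2 - u 2 * w 0)) * (u 0 * w 2 - u 2 * w 0) := by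
        rw [div_mul_cancel₀ _ hP]
      have hl3 : starRingEnd ℂ (u 1) * starRingEnd ℂ (w 2) - starRingEnd ℂ (u 2) * starRingEnd ℂ (w 1) = -(((starRingEnd ℂ (u 1) * starRingEnd ℂ (w 3) - starRingEnd ℂ (u 3) * starRingEnd ℂ (w 1)) / (u 0 * w 2 - u 2 * w 0)) * (u 0 * w 3 - u 3 * w 0)) := by
        rw [div_mul_eq_mul_div, ← neg_div, eq_div_iff hP]
        linear_combination I24
      exact key S u w 0 2 hP hu hw hsp _ hnorm hl1 hl2 hl3
    · have hcP : starRingEnd ℂ (u 1 * w 3 - u 3 * w 1) ≠ 0 := by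
        rw [starRingEnd_apply]; exact star_ne_zero.mpr hP
      have hnorm : ((starRingEnd ℂ (u 0) * starRingEnd ℂ (w 2) - starRingEnd ℂ (u 2) * starRingEnd ℂ (w 0)) / (u 1 * w 3 - u 3 * w 1)) * starRingEnd ℂ ((starRingEnd ℂ (u 0) * starRingEnd ℂ (w 2) - starRingEnd ℂ (u 2) * starRingEnd ℂ (w 0)) / (u 1 * w 3 - u 3 * w 1)) = 1 := by
        rw [map_div₀, div_mul_div_comm, div_eq_one_iff_eq (mul_ne_zero hP hcP)]
        simp only [_root_.map_sub, _root_.map_mul, Complex.conj_conj]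
        linear_combination -I23
      have hl1 : starRingEnd ℂ (u 2) * starRingEnd ℂ (w 3) - starRingEnd ℂ (u 3) * starRingEnd ℂ (w 2) = ((starRingEnd ℂ (u 0) * starRingEnd ℂ (w 2) - starRingEnd ℂ (u 2) * starRingEnd ℂ (w 0)) / (u 1 * w 3 - u 3 * w 1)) * (u 0 * w 1 - u 1 * w 0) := by
        rw [div_mul_eq_mul_div, eq_div_iff hP]
        linear_combination I03
      have hl2 : starRingEnd ℂ (u 1) * starRingEnd ℂ (w 3) - starRingEnd ℂ (u 3) * starRingEnd ℂ (w 1) = ((starRingEnd ℂ (u 0) * starRingEnd ℂ (w 2) - starRingEnd ℂ (u 2) * starRingEnd ℂ (w 0)) / (u 1 * w 3 - u 3 * w 1)) * (u 0 * w 2 - u 2 * w 0) := by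
        rw [div_mul_eq_mul_div, eq_div_iff hP]
        linear_combination I23
      have hl3 : starRingEnd ℂ (u 1) * starRingEnd ℂ (w 2) - starRingEnd ℂ (u 2) * starRingEnd ℂ (w 1) = -(((starRingEnd ℂ (u 0) * starRingEnd ℂ (w 2) - starRingEnd ℂ (u 2) * starRingEnd ℂ (w 0)) / (u 1 * w 3 - u 3 * w 1)) * (u 0 * w 3 - u 3 * w 0)) := by
        rw [div_mul_eq_mul_div, ← neg_div, eq_div_iff hP]
        linear_combination I34
      exact key S u w 1 3 hP hu hw hsp _ hnorm hl1 hl2 hl3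
    · have hcP : starRingEnd ℂ (u 0 * w 3 - u 3 * w 0) ≠ 0 := by
        rw [starRingEnd_apply]; exact star_ne_zero.mpr hP
      have hnorm : ((starRingEnd ℂ (u 2) * starRingEnd ℂ (w 1) - starRingEnd ℂ (u 1) * starRingEnd ℂ (w 2)) / (u 0 * w 3 - u 3 * w 0)) * starRingEnd ℂ ((starRingEnd ℂ (u 2) * starRingEnd ℂ (w 1) - starRingEnd ℂ (u 1) * starRingEnd ℂ (w 2)) / (u 0 * w 3 - u 3 * w 0)) = 1 := by
        rw [map_div₀, div_mul_div_comm, div_eq_one_iff_eq (mul_ne_zero hP hcP)]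
        simp only [_root_.map_sub, _root_.map_mul, Complex.conj_conj]
        linear_combination -I45
      have hl1 : starRingEnd ℂ (u 2) * starRingEnd ℂ (w 3) - starRingEnd ℂ (u 3) * starRingEnd ℂ (w 2) = ((starRingEnd ℂ (u 2) * starRingEnd ℂ (w 1) - starRingEnd ℂ (u 1) * starRingEnd ℂ (w 2)) / (u 0 * w 3 - u 3 * w 0)) * (u 0 * w 1 - u 1 * w 0) := by
        rw [div_mul_eq_mul_div, eq_div_iff hP]
        linear_combination I04
      have hl2 : starRingEnd ℂ (u 1) * starRingEnd ℂ (w 3) - starRingEnd ℂ (u 3) * starRingEnd ℂ (w 1) = ((starRingEnd ℂ (u 2) * starRingEnd ℂ (w 1) - starRingEnd ℂ (u 1) * starRingEnd ℂ (w 2)) / (u 0 * w 3 - u 3 * w 0)) * (u 0 * w 2 - u 2 * w 0) := by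
        rw [div_mul_eq_mul_div, eq_div_iff hP]
        linear_combination I24
      have hl3 : starRingEnd ℂ (u 1) * starRingEnd ℂ (w 2) - starRingEnd ℂ (u 2) * starRingEnd ℂ (w 1) = -(((starRingEnd ℂ (u 2) * starRingEnd ℂ (w 1) - starRingEnd ℂ (u 1) * starRingEnd ℂ (w 2)) / (u 0 * w 3 - u 3 * w 0)) * (u 0 * w 3 - u 3 * w 0)) := by
        rw [div_mul_cancel₀ _ hP]; ring
      exact key S u w 0 3 hP hu hw hsp _ hnorm hl1 hl2 hl3
    · have hcP : starRingEnd ℂ (u 1 * w 2 - u 2 * w 1) ≠ 0 := by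
        rw [starRingEnd_apply]; exact star_ne_zero.mpr hP
      have hnorm : ((starRingEnd ℂ (u 3) * starRingEnd ℂ (w 0) - starRingEnd ℂ (u 0) * starRingEnd ℂ (w 3)) / (u 1 * w 2 - u 2 * w 1)) * starRingEnd ℂ ((starRingEnd ℂ (u 3) * starRingEnd ℂ (w 0) - starRingEnd ℂ (u 0) * starRingEnd ℂ (w 3)) / (u 1 * w 2 - u 2 * w 1)) = 1 := by
        rw [map_div₀, div_mul_div_comm, div_eq_one_iff_eq (mul_ne_zero hP hcP)]
        simp only [_root_.map_sub, _root_.map_mul, Complex.conj_conj]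
        linear_combination I45
      have hl1 : starRingEnd ℂ (u 2) * starRingEnd ℂ (w 3) - starRingEnd ℂ (u 3) * starRingEnd ℂ (w 2) = ((starRingEnd ℂ (u 3) * starRingEnd ℂ (w 0) - starRingEnd ℂ (u 0) * starRingEnd ℂ (w 3)) / (u 1 * w 2 - u 2 * w 1)) * (u 0 * w 1 - u 1 * w 0) := by
        rw [div_mul_eq_mul_div, eq_div_iff hP]
        linear_combination I05
      have hl2 : starRingEnd ℂ (u 1) * starRingEnd ℂ (w 3) - starRingEnd ℂ (u 3) * starRingEnd ℂ (w 1) = ((starRingEnd ℂ (u 3) * starRingEnd ℂ (w 0) - starRingEnd ℂ (u 0) * starRingEnd ℂ (w 3)) / (u 1 * w 2 - u 2 * w 1)) * (u 0 * w 2 - u 2 * w 0) := by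
        rw [div_mul_eq_mul_div, eq_div_iff hP]
        linear_combination I25
      have hl3 : starRingEnd ℂ (u 1) * starRingEnd ℂ (w 2) - starRingEnd ℂ (u 2) * starRingEnd ℂ (w 1) = -(((starRingEnd ℂ (u 3) * starRingEnd ℂ (w 0) - starRingEnd ℂ (u 0) * starRingEnd ℂ (w 3)) / (u 1 * w 2 - u 2 * w 1)) * (u 0 * w 3 - u 3 * w 0)) := by
        rw [div_mul_eq_mul_div, ← neg_div, eq_div_iff hP]
        linear_combination -I45
      exact key S u w 1 2 hP hu hw hsp _ hnorm hl1 hl2 hl3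
  obtain ⟨x, hQ0, hR⟩ := main
  refine ⟨x, ?_, hQ0, hR⟩
  intro hx0
  rw [hx0] at hR
  have hXz : Xm 0 = 0 := by
    simp [Xm]
  rw [hXz, Matrix.mulVecLin_zero, LinearMap.range_zero] at hR
  rw [hR] at hdim
  simp [finrank_bot] at hdim
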